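/- For every s > 0 and P > 0, the near-field joint density p_NF^S(x₁,x₂) = (1/(√(2πs)·A₁·P)) · e^{−(x₁+x₂)²/(2s)} · sint²((x₁−x₂)²/(4P²)) has second moment ∫_{ℝ²} x₁² p_NF^S(x₁,x₂) dx₁ dx₂ = (1/4)(s + 4A₂P²/A₁), where A₁ := ∫_ℝ sint²(ξ²) dξ and A₂ := ∫_ℝ ξ² sint²(ξ²) dξ. -/

import Mathlib

open MeasureTheory Real

/-- `sinc x = sin x / x` for `x ≠ 0`, and `sinc 0 = 1`. -/
noncomputable def sinc (x : ℝ) : ℝ := if x = 0 then 1 else Real.sin x / x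

/-- `sint x = 1 − (2/π) ∫₀ˣ sinc t dt`. -/
noncomputable def sint (x : ℝ) : ℝ := 1 - (2 / Real.pi) * ∫ t in (0:ℝ)..x, _root_.sinc t

/-- `A₁ = ∫_ℝ sint²(ξ²) dξ`. -/
noncomputable def A₁ : ℝ := ∫ ξ : ℝ, (sint (ξ ^ 2)) ^ 2

/-- The near-field joint probability density of the SPDC two-photon state. -/
noncomputable def pNF (s P x₁ x₂ : ℝ) : ℝ :=
  (Real.sqrt (2 * Real.pi * s) * A₁ * P)⁻¹ * Real.exp (-(x₁ + x₂) ^ 2 / (2 * s)) *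
    (sint ((x₁ - x₂) ^ 2 / (4 * P ^ 2))) ^ 2

/-- `A₂ = ∫_ℝ ξ² sint²(ξ²) dξ`. -/
noncomputable def A₂ : ℝ := ∫ ξ : ℝ, ξ ^ 2 * (sint (ξ ^ 2)) ^ 2


open Filter Set
open scoped ENNReal

lemma sinc_zero : _root_.sinc 0 = 1 := by simp [_root_.sinc]

lemma continuous_sinc : Continuous _root_.sinc := by
  rw [continuous_iff_continuousAt]
  intro x
  rcases eq_or_ne x 0 with rfl | hx
  · have h : Tendsto (fun t : ℝ => Real.sin t / t) (nhdsWithin 0 {0}ᶜ) (nhds 1) := by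
      simpa [slope_fun_def, Real.sin_zero, Real.cos_zero, div_eq_mul_inv, mul_comm] using
        (hasDerivAt_iff_tendsto_slope.1 (Real.hasDerivAt_sin 0))
    have h2 : Tendsto _root_.sinc (nhdsWithin 0 {0}ᶜ) (nhds 1) := by
      refine Tendsto.congr' ?_ h
      filter_upwards [self_mem_nhdsWithin] with t ht
      have : t ≠ 0 := ht
      simp [_root_.sinc, this]
    rw [ContinuousAt, _root_.sinc_zero, ← nhdsNE_sup_pure 0, tendsto_sup]
    exact ⟨h2, by simpa [_root_.sinc_zero] using tendsto_pure_nhds _root_.sinc 0⟩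
  · have : ContinuousAt (fun t : ℝ => Real.sin t / t) x :=
      (Real.continuous_sin.continuousAt).div continuousAt_id hx
    refine this.congr ?_
    filter_upwards [isOpen_compl_singleton.mem_nhds (by simpa using hx)] with t ht
    have : t ≠ 0 := ht
    simp [_root_.sinc, this]

lemma abs_sinc_le_one (x : ℝ) : |_root_.sinc x| ≤ 1 := by
  rcases eq_or_ne x 0 with rfl | hx
  · simp [_root_.sinc]
  · rw [_root_.sinc, if_neg hx, abs_div]
    rw [div_le_one (abs_pos.2 hx)]
    exact Real.abs_sin_le_abs

lemma sinc_intervalIntegrable (a b : ℝ) : IntervalIntegrable _root_.sinc volume a b :=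
  _root_.continuous_sinc.intervalIntegrable a b

lemma continuous_sint : Continuous sint := by
  unfold sint
  exact continuous_const.sub (continuous_const.mul
    (intervalIntegral.continuous_primitive (fun a b => sinc_intervalIntegrable a b) 0))

lemma hasDerivAt_aux (y t : ℝ) :
    HasDerivAt (fun t => -(Real.exp (-(y*t)) * (Real.cos t + y * Real.sin t)) / (1+y^2))
      (Real.exp (-(y*t)) * Real.sin t) t := by
  have h1 : HasDerivAt (fun t : ℝ => Real.exp (-(y*t))) (-y * Real.exp (-(y*t))) t := by
    have h := (((hasDerivAt_id t).const_mul y).neg).exp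
    convert h using 1
    · funext x; rfl
    · simp only [id, mul_one, Pi.neg_apply]; ring
  have h2 : HasDerivAt (fun t : ℝ => Real.cos t + y * Real.sin t)
      (-Real.sin t + y * Real.cos t) t :=
    (Real.hasDerivAt_cos t).add ((Real.hasDerivAt_sin t).const_mul y)
  have h3 := ((h1.mul h2).neg).div_const (1+y^2)
  refine h3.congr_deriv ?_
  have hy : (1:ℝ) + y^2 ≠ 0 := by positivity
  rw [div_eq_iff hy]
  ring

lemma integral_exp_mul_sin (y T : ℝ) :
    ∫ t in (0:ℝ)..T, Real.exp (-(y*t)) * Real.sin t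
      = (1 - Real.exp (-(y*T)) * (Real.cos T + y * Real.sin T)) / (1+y^2) := by
  have := intervalIntegral.integral_eq_sub_of_hasDerivAt (f := fun t =>
      -(Real.exp (-(y*t)) * (Real.cos t + y * Real.sin t)) / (1+y^2))
    (fun t _ => hasDerivAt_aux y t)
    (Continuous.intervalIntegrable (by continuity) 0 T)
  rw [this]
  simp
  ring

lemma integral_exp_neg_mul_Ioi {c : ℝ} (hc : 0 < c) :
    ∫ y in Ioi (0:ℝ), Real.exp (-(c*y)) = 1/c := by
  have := integral_comp_mul_left_Ioi (fun x => Real.exp (-x)) 0 hc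
  simp only [mul_zero] at this
  rw [show (fun y => Real.exp (-(c*y))) = (fun y => Real.exp (-(c*y))) from rfl]
  calc ∫ y in Ioi (0:ℝ), Real.exp (-(c*y)) = c⁻¹ • ∫ x in Ioi (0:ℝ), Real.exp (-x) := this
    _ = 1/c := by rw [integral_exp_neg_Ioi_zero]; simp [one_div]

lemma integrableOn_exp_neg_mul {c : ℝ} (hc : 0 < c) :
    IntegrableOn (fun y => Real.exp (-(c*y))) (Ioi (0:ℝ)) := by
  simpa [neg_mul] using exp_neg_integrableOn_Ioi 0 hc

noncomputable def Rrem (T : ℝ) : ℝ :=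
  ∫ y in Ioi (0:ℝ), Real.exp (-(y*T)) * (Real.cos T + y * Real.sin T) / (1+y^2)

lemma integrableOn_Rrem {T : ℝ} (hT : 0 < T) :
    IntegrableOn (fun y => Real.exp (-(y*T)) * (Real.cos T + y * Real.sin T) / (1+y^2))
      (Ioi (0:ℝ)) := by
  apply Integrable.mono' ((integrableOn_exp_neg_mul hT).const_mul 2)
  · have hc : Continuous (fun y : ℝ => Real.exp (-(y*T)) * (Real.cos T + y * Real.sin T) / (1+y^2)) :=
      Continuous.div (by continuity) (by continuity) (fun y => by positivity)
    exact hc.aestronglyMeasurable.restrict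
  · filter_upwards [ae_restrict_mem measurableSet_Ioi] with y hy
    have hy0 : (0:ℝ) < y := hy
    have h1 : |Real.cos T + y * Real.sin T| ≤ 1 + y := by
      calc |Real.cos T + y * Real.sin T| ≤ |Real.cos T| + |y * Real.sin T| := abs_add_le _ _
        _ ≤ 1 + y := by
            rw [abs_mul, abs_of_pos hy0]
            have := Real.abs_cos_le_one T
            have h2 := Real.abs_sin_le_one T
            nlinarith
    have hden : (0:ℝ) < 1 + y^2 := by positivity
    have hexp : (0:ℝ) < Real.exp (-(y*T)) := Real.exp_pos _
    rw [Real.norm_eq_abs, abs_div, abs_mul, abs_of_pos hexp, abs_of_pos hden]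
    rw [div_le_iff₀ hden, mul_comm T y]
    have h3 : 1 + y ≤ 2 * (1 + y^2) := by nlinarith
    calc Real.exp (-(y*T)) * |Real.cos T + y * Real.sin T|
        ≤ Real.exp (-(y*T)) * (1 + y) := by nlinarith
      _ ≤ Real.exp (-(y*T)) * (2 * (1+y^2)) := by nlinarith
      _ = 2 * Real.exp (-(y*T)) * (1+y^2) := by ring

lemma abs_Rrem_le {T : ℝ} (hT : 0 < T) : |Rrem T| ≤ 2 / T := by
  have hb : ∀ᵐ y ∂(volume.restrict (Ioi (0:ℝ))),
      ‖Real.exp (-(y*T)) * (Real.cos T + y * Real.sin T) / (1+y^2)‖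
        ≤ 2 * Real.exp (-(T*y)) := by
    filter_upwards [ae_restrict_mem measurableSet_Ioi] with y hy
    have hy0 : (0:ℝ) < y := hy
    have h1 : |Real.cos T + y * Real.sin T| ≤ 1 + y := by
      calc |Real.cos T + y * Real.sin T| ≤ |Real.cos T| + |y * Real.sin T| := abs_add_le _ _
        _ ≤ 1 + y := by
            rw [abs_mul, abs_of_pos hy0]
            have := Real.abs_cos_le_one T
            have h2 := Real.abs_sin_le_one T
            nlinarith
    have hden : (0:ℝ) < 1 + y^2 := by positivity
    have hexp : (0:ℝ) < Real.exp (-(y*T)) := Real.exp_pos _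
    rw [Real.norm_eq_abs, abs_div, abs_mul, abs_of_pos hexp, abs_of_pos hden, mul_comm T y,
      div_le_iff₀ hden]
    have h3 : 1 + y ≤ 2 * (1 + y^2) := by nlinarith
    nlinarith [mul_le_mul_of_nonneg_left h1 hexp.le, mul_le_mul_of_nonneg_left h3 hexp.le]
  have := norm_integral_le_of_norm_le ((integrableOn_exp_neg_mul hT).const_mul 2) hb
  rw [Rrem] at *
  calc |∫ y in Ioi (0:ℝ), Real.exp (-(y*T)) * (Real.cos T + y * Real.sin T) / (1+y^2)|
      ≤ ∫ y in Ioi (0:ℝ), 2 * Real.exp (-(T*y)) := this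
    _ = 2 / T := by
        rw [integral_const_mul, integral_exp_neg_mul_Ioi hT]; ring

lemma Si_eq {T : ℝ} (hT : 0 < T) :
    ∫ t in (0:ℝ)..T, _root_.sinc t = π/2 - Rrem T := by
  set μ := volume.restrict (Ioc (0:ℝ) T)
  set ν := volume.restrict (Ioi (0:ℝ))
  have hKc : Continuous (fun p : ℝ × ℝ => Real.exp (-(p.2 * p.1)) * Real.sin p.1) :=
    (Real.continuous_exp.comp ((continuous_snd.mul continuous_fst).neg)).mul
      (Real.continuous_sin.comp continuous_fst)
  have hKm : AEStronglyMeasurable (fun p : ℝ × ℝ => Real.exp (-(p.2 * p.1)) * Real.sin p.1)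
      (μ.prod ν) := hKc.aestronglyMeasurable
  have hint : Integrable (fun p : ℝ × ℝ => Real.exp (-(p.2 * p.1)) * Real.sin p.1) (μ.prod ν) := by
    rw [integrable_prod_iff hKm]
    constructor
    · filter_upwards [ae_restrict_mem measurableSet_Ioc] with t ht
      have ht0 : (0:ℝ) < t := ht.1
      have : IntegrableOn (fun y => Real.exp (-(t*y))) (Ioi (0:ℝ)) := integrableOn_exp_neg_mul ht0
      have h2 := this.mul_const (Real.sin t)
      have heq : (fun y => Real.exp (-(y * t)) * Real.sin t)
          = fun y => Real.exp (-(t * y)) * Real.sin t := by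
        funext y; rw [mul_comm y t]
      rw [heq]
      exact h2
    · apply Integrable.mono' (g := fun _ : ℝ => (1:ℝ))
      · exact integrableOn_const measure_Ioc_lt_top.ne
      · exact hKm.norm.integral_prod_right'
      · filter_upwards [ae_restrict_mem measurableSet_Ioc] with t ht
        have ht0 : (0:ℝ) < t := ht.1
        have hval : ∫ y, ‖Real.exp (-(y * t)) * Real.sin t‖ ∂ν = |Real.sin t| * (1/t) := by
          have : ∀ y : ℝ, ‖Real.exp (-(y * t)) * Real.sin t‖
              = |Real.sin t| * Real.exp (-(t * y)) := by
            intro y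
            rw [norm_mul, Real.norm_eq_abs, Real.norm_eq_abs, Real.abs_exp, mul_comm y t, mul_comm]
          simp_rw [this]
          rw [integral_const_mul, integral_exp_neg_mul_Ioi ht0]
        rw [Real.norm_eq_abs, hval, abs_of_nonneg (by positivity)]
        rw [mul_one_div, div_le_one ht0]
        calc |Real.sin t| ≤ |t| := Real.abs_sin_le_abs
          _ = t := abs_of_pos ht0
  have swap := integral_integral_swap (f := fun t y => Real.exp (-(y * t)) * Real.sin t)
    (μ := μ) (ν := ν) hint
  have lhs : ∫ t in (0:ℝ)..T, _root_.sinc t = ∫ t, (∫ y, Real.exp (-(y * t)) * Real.sin t ∂ν) ∂μ := by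
    rw [intervalIntegral.integral_of_le hT.le]
    apply setIntegral_congr_fun measurableSet_Ioc
    intro t ht
    have ht0 : (0:ℝ) < t := ht.1
    have : ∫ y, Real.exp (-(y * t)) * Real.sin t ∂ν = (1/t) * Real.sin t := by
      have : (fun y => Real.exp (-(y * t)) * Real.sin t)
          = fun y => Real.exp (-(t * y)) * Real.sin t := by
        funext y; rw [mul_comm y t]
      rw [this, integral_mul_const, integral_exp_neg_mul_Ioi ht0]
    dsimp only
    rw [this, _root_.sinc, if_neg ht0.ne']
    ring
  have rhs : ∫ y, (∫ t, Real.exp (-(y * t)) * Real.sin t ∂μ) ∂ν = π/2 - Rrem T := by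
    have h1 : ∀ y : ℝ, ∫ t, Real.exp (-(y * t)) * Real.sin t ∂μ
        = (1 - Real.exp (-(y*T)) * (Real.cos T + y * Real.sin T)) / (1+y^2) := by
      intro y
      rw [show (∫ t, Real.exp (-(y * t)) * Real.sin t ∂μ)
          = ∫ t in (0:ℝ)..T, Real.exp (-(y*t)) * Real.sin t by
        rw [intervalIntegral.integral_of_le hT.le]]
      exact integral_exp_mul_sin y T
    simp_rw [h1]
    have hsplit : ∀ y : ℝ, (1 - Real.exp (-(y*T)) * (Real.cos T + y * Real.sin T)) / (1+y^2)
        = (1+y^2)⁻¹ - Real.exp (-(y*T)) * (Real.cos T + y * Real.sin T) / (1+y^2) := by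
      intro y
      have : (1:ℝ) + y^2 ≠ 0 := by positivity
      field_simp
    simp_rw [hsplit]
    rw [integral_sub (integrable_inv_one_add_sq.integrableOn) (integrableOn_Rrem hT),
      integral_Ioi_inv_one_add_sq, Rrem]
    simp
  rw [lhs, swap, rhs]

lemma tendsto_Si : Tendsto (fun T => ∫ t in (0:ℝ)..T, _root_.sinc t) atTop (nhds (π/2)) := by
  have h1 : Tendsto Rrem atTop (nhds 0) := by
    have hg : Tendsto (fun T : ℝ => 2/T) atTop (nhds 0) :=
      (tendsto_const_nhds (x := (2:ℝ))).div_atTop tendsto_id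
    refine squeeze_zero_norm' ?_ hg
    · filter_upwards [eventually_gt_atTop (0:ℝ)] with T hT
      exact abs_Rrem_le hT
  have h2 : Tendsto (fun T => π/2 - Rrem T) atTop (nhds (π/2 - 0)) :=
    tendsto_const_nhds.sub h1
  rw [sub_zero] at h2
  apply h2.congr'
  filter_upwards [eventually_gt_atTop (0:ℝ)] with T hT
  exact (Si_eq hT).symm

lemma abs_integral_sinc_tail {a b : ℝ} (ha : 0 < a) (hab : a ≤ b) :
    |∫ t in a..b, _root_.sinc t| ≤ 2 / a := by
  have huIcc : uIcc a b = Icc a b := uIcc_of_le hab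
  have hpos : ∀ t ∈ uIcc a b, (0:ℝ) < t := by
    intro t ht; rw [huIcc] at ht; exact lt_of_lt_of_le ha ht.1
  -- integrability of the pieces
  have hcont2 : ContinuousOn (fun t : ℝ => Real.cos t / t^2) (uIcc a b) :=
    (Real.continuous_cos.continuousOn).div (continuous_pow 2).continuousOn
      (fun t ht => by have := hpos t ht; positivity)
  have hint2 : IntervalIntegrable (fun t : ℝ => Real.cos t / t^2) volume a b :=
    hcont2.intervalIntegrable
  have hintinv2 : IntervalIntegrable (fun t : ℝ => t⁻¹^2) volume a b :=
    ((ContinuousOn.inv₀ (continuousOn_id (s := uIcc a b))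
      (fun t ht => (hpos t ht).ne')).pow 2).intervalIntegrable
  -- derivative of -cos t / t
  have hF : ∀ t ∈ uIcc a b, HasDerivAt (fun t : ℝ => -Real.cos t / t)
      (_root_.sinc t + Real.cos t / t^2) t := by
    intro t ht
    have ht0 : (0:ℝ) < t := hpos t ht
    have h1 := ((Real.hasDerivAt_cos t).neg).div (hasDerivAt_id t) ht0.ne'
    refine h1.congr_deriv ?_
    rw [show _root_.sinc t = Real.sin t / t from if_neg ht0.ne',
      div_add_div _ _ ht0.ne' (pow_ne_zero 2 ht0.ne')]
    simp only [id, Pi.neg_apply]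
    rw [div_eq_div_iff (pow_ne_zero 2 ht0.ne') (mul_ne_zero ht0.ne' (pow_ne_zero 2 ht0.ne'))]
    ring
  have key : ∫ t in a..b, (_root_.sinc t + Real.cos t / t^2) = -Real.cos b / b - -Real.cos a / a := by
    apply intervalIntegral.integral_eq_sub_of_hasDerivAt
    · intro t ht; exact hF t ht
    · exact (sinc_intervalIntegrable a b).add hint2
  have hsplit : ∫ t in a..b, (_root_.sinc t + Real.cos t / t^2)
      = (∫ t in a..b, _root_.sinc t) + ∫ t in a..b, Real.cos t / t^2 :=
    intervalIntegral.integral_add (sinc_intervalIntegrable a b) hint2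
  have hbound2 : |∫ t in a..b, Real.cos t / t^2| ≤ 1/a - 1/b := by
    have hb : ‖∫ t in a..b, Real.cos t / t^2‖ ≤ |∫ t in a..b, t⁻¹^2| := by
      apply intervalIntegral.norm_integral_le_abs_of_norm_le ?_ hintinv2
      filter_upwards [ae_restrict_mem measurableSet_uIoc] with t ht
      have ht0 : (0:ℝ) < t := by
        rcases ht with ⟨h1, _⟩
        rw [min_def] at h1
        split_ifs at h1 <;> linarith
      rw [Real.norm_eq_abs, abs_div, abs_of_pos (by positivity : (0:ℝ) < t^2)]
      rw [div_le_iff₀ (by positivity : (0:ℝ) < t^2), inv_pow]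
      have := Real.abs_cos_le_one t
      have h2 : (t^2)⁻¹ * t^2 = 1 := inv_mul_cancel₀ (by positivity)
      rw [h2]
      exact this
    have hval : ∫ t in a..b, t⁻¹^2 = 1/a - 1/b := by
      have : ∀ t ∈ uIcc a b, HasDerivAt (fun t : ℝ => -t⁻¹) (t⁻¹^2) t := by
        intro t ht
        have ht0 := (hpos t ht).ne'
        have := (hasDerivAt_inv ht0).neg
        refine this.congr_deriv ?_
        rw [neg_neg, inv_pow]
      rw [intervalIntegral.integral_eq_sub_of_hasDerivAt this hintinv2]
      field_simp
      ring
    rw [hval] at hb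
    have hab' : (0:ℝ) ≤ 1/a - 1/b := by
      rw [sub_nonneg]
      exact one_div_le_one_div_of_le ha hab
    rwa [abs_of_nonneg hab', Real.norm_eq_abs] at hb
  have e1 : ∫ t in a..b, _root_.sinc t
      = (-Real.cos b / b - -Real.cos a / a) - ∫ t in a..b, Real.cos t / t^2 := by
    rw [← key, hsplit]; ring
  rw [e1]
  have hb0 : (0:ℝ) < b := lt_of_lt_of_le ha hab
  have hca : |(-Real.cos a) / a| ≤ 1/a := by
    rw [abs_div, abs_neg, abs_of_pos ha]
    gcongr
    exact Real.abs_cos_le_one a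
  have hcb : |(-Real.cos b) / b| ≤ 1/b := by
    rw [abs_div, abs_neg, abs_of_pos hb0]
    gcongr
    exact Real.abs_cos_le_one b
  have htri1 : |(-Real.cos b / b - -Real.cos a / a) - ∫ t in a..b, Real.cos t / t^2|
      ≤ |(-Real.cos b / b)| + |(-Real.cos a / a)| + |∫ t in a..b, Real.cos t / t^2| := by
    calc |(-Real.cos b / b - -Real.cos a / a) - ∫ t in a..b, Real.cos t / t^2|
        ≤ |(-Real.cos b / b - -Real.cos a / a)| + |∫ t in a..b, Real.cos t / t^2| :=
          abs_sub _ _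
      _ ≤ |(-Real.cos b / b)| + |(-Real.cos a / a)| + |∫ t in a..b, Real.cos t / t^2| := by
          have := abs_sub (-Real.cos b / b) (-Real.cos a / a)
          linarith
  have hab2 : 1/b + 1/a + (1/a - 1/b) = 2/a := by ring
  calc |(-Real.cos b / b - -Real.cos a / a) - ∫ t in a..b, Real.cos t / t^2|
      ≤ |(-Real.cos b / b)| + |(-Real.cos a / a)| + |∫ t in a..b, Real.cos t / t^2| := htri1
    _ ≤ 1/b + 1/a + (1/a - 1/b) := by
        have : |(-Real.cos b / b)| = |(-Real.cos b) / b| := by rw [neg_div]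
        have : |(-Real.cos a / a)| = |(-Real.cos a) / a| := by rw [neg_div]
        rw [neg_div, neg_div] at *
        linarith [hca, hcb, hbound2]
    _ = 2/a := hab2

lemma abs_pi_div_two_sub_Si {a : ℝ} (ha : 0 < a) :
    |π/2 - ∫ t in (0:ℝ)..a, _root_.sinc t| ≤ 2/a := by
  have h1 : Tendsto (fun b => |(∫ t in (0:ℝ)..b, _root_.sinc t) - ∫ t in (0:ℝ)..a, _root_.sinc t|)
      atTop (nhds |π/2 - ∫ t in (0:ℝ)..a, _root_.sinc t|) :=
    ((tendsto_Si.sub_const _).abs)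
  apply le_of_tendsto h1
  filter_upwards [eventually_ge_atTop a] with b hb
  have hadj : (∫ t in (0:ℝ)..a, _root_.sinc t) + ∫ t in a..b, _root_.sinc t = ∫ t in (0:ℝ)..b, _root_.sinc t :=
    intervalIntegral.integral_add_adjacent_intervals (sinc_intervalIntegrable 0 a)
      (sinc_intervalIntegrable a b)
  have : (∫ t in (0:ℝ)..b, _root_.sinc t) - ∫ t in (0:ℝ)..a, _root_.sinc t = ∫ t in a..b, _root_.sinc t := by
    rw [← hadj]; ring
  rw [this]
  exact abs_integral_sinc_tail ha hb

lemma abs_sint_le_of_pos {x : ℝ} (hx : 0 < x) : |sint x| ≤ 2/x := by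
  have hpi : (0:ℝ) < π := Real.pi_pos
  have h2pi : (2:ℝ) ≤ π := Real.two_le_pi
  have heq : sint x = (2/π) * (π/2 - ∫ t in (0:ℝ)..x, _root_.sinc t) := by
    rw [sint]
    field_simp
  rw [heq, abs_mul, abs_of_pos (by positivity : (0:ℝ) < 2/π)]
  have h1 := abs_pi_div_two_sub_Si hx
  have h2 : 2/π ≤ 1 := by
    rw [div_le_one hpi]; exact h2pi
  calc 2/π * |π/2 - ∫ t in (0:ℝ)..x, _root_.sinc t| ≤ 1 * (2/x) := by
        apply mul_le_mul h2 h1 (abs_nonneg _) (by norm_num)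
    _ = 2/x := one_mul _

lemma abs_sint_le_two {x : ℝ} (hx : 0 ≤ x) : |sint x| ≤ 2 := by
  rcases le_or_gt x 1 with h1 | h1
  · have hpi : (0:ℝ) < π := Real.pi_pos
    have h2pi : (2:ℝ) ≤ π := Real.two_le_pi
    have hSi : |∫ t in (0:ℝ)..x, _root_.sinc t| ≤ x := by
      have := intervalIntegral.norm_integral_le_of_norm_le_const
        (f := _root_.sinc) (a := (0:ℝ)) (b := x) (C := 1) ?_
      · rwa [sub_zero, abs_of_nonneg hx, one_mul, Real.norm_eq_abs] at this
      · intro t _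
        rw [Real.norm_eq_abs]; exact _root_.abs_sinc_le_one t
    rw [sint]
    have h3 : |(1:ℝ) - 2/π * ∫ t in (0:ℝ)..x, _root_.sinc t| ≤ 1 + 2/π * x := by
      calc |(1:ℝ) - 2/π * ∫ t in (0:ℝ)..x, _root_.sinc t|
          ≤ |(1:ℝ)| + |2/π * ∫ t in (0:ℝ)..x, _root_.sinc t| := abs_sub _ _
        _ ≤ 1 + 2/π * x := by
            rw [abs_one, abs_mul, abs_of_pos (by positivity : (0:ℝ) < 2/π)]
            have : 2/π * |∫ t in (0:ℝ)..x, _root_.sinc t| ≤ 2/π * x :=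
              mul_le_mul_of_nonneg_left hSi (by positivity)
            linarith
    have h4 : 2/π * x ≤ 1 := by
      have : 2/π ≤ 1 := by rw [div_le_one hpi]; exact h2pi
      nlinarith
    linarith
  · have := abs_sint_le_of_pos (lt_trans zero_lt_one h1)
    have h2 : 2/x ≤ 2 := by
      rw [div_le_iff₀ (lt_trans zero_lt_one h1)]; nlinarith
    linarith

lemma sq_le_of_abs_le' {a b : ℝ} (h : |a| ≤ b) : a^2 ≤ b^2 := by
  have := pow_le_pow_left₀ (abs_nonneg a) h 2
  rwa [sq_abs] at this

lemma sint_sq_le (ξ : ℝ) : (sint (ξ^2))^2 ≤ 8/(1+ξ^2) := by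
  have hd : (0:ℝ) < 1 + ξ^2 := by positivity
  rcases le_or_gt (ξ^2) 1 with h1 | h1
  · have h := abs_sint_le_two (x := ξ^2) (by positivity)
    have h4 : (sint (ξ^2))^2 ≤ 4 := by
      have := sq_le_of_abs_le' h; norm_num at this; exact this
    rw [le_div_iff₀ hd]
    nlinarith
  · have hpos : (0:ℝ) < ξ^2 := lt_trans zero_lt_one h1
    have h := abs_sint_le_of_pos hpos
    have hsq : (sint (ξ^2))^2 ≤ (2/ξ^2)^2 := sq_le_of_abs_le' h
    rw [le_div_iff₀ hd]
    have : (2/ξ^2)^2 = 4/(ξ^2)^2 := by ring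
    have h2 : (2/ξ^2)^2 * (1+ξ^2) ≤ 8 := by
      rw [this, div_mul_eq_mul_div, div_le_iff₀ (by positivity)]
      nlinarith
    nlinarith [mul_le_mul_of_nonneg_right hsq hd.le]

lemma mul_sint_sq_le (ξ : ℝ) : ξ^2 * (sint (ξ^2))^2 ≤ 8/(1+ξ^2) := by
  have hd : (0:ℝ) < 1 + ξ^2 := by positivity
  rcases le_or_gt (ξ^2) 1 with h1 | h1
  · have h := abs_sint_le_two (x := ξ^2) (by positivity)
    have h4 : (sint (ξ^2))^2 ≤ 4 := by
      have := sq_le_of_abs_le' h; norm_num at this; exact this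
    have hA : ξ^2 * (sint (ξ^2))^2 ≤ 4 := by
      calc ξ^2 * (sint (ξ^2))^2 ≤ 1 * 4 :=
            mul_le_mul h1 h4 (sq_nonneg _) zero_le_one
        _ = 4 := by norm_num
    rw [le_div_iff₀ hd]
    nlinarith [mul_nonneg (sq_nonneg ξ) (sq_nonneg (sint (ξ^2)))]
  · have hpos : (0:ℝ) < ξ^2 := lt_trans zero_lt_one h1
    have h := abs_sint_le_of_pos hpos
    have hsq : (sint (ξ^2))^2 ≤ (2/ξ^2)^2 := sq_le_of_abs_le' h
    rw [le_div_iff₀ hd]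
    have h2 : ξ^2 * (2/ξ^2)^2 * (1+ξ^2) ≤ 8 := by
      have : ξ^2 * (2/ξ^2)^2 = 4/ξ^2 := by field_simp; ring
      rw [this, div_mul_eq_mul_div, div_le_iff₀ hpos]
      nlinarith
    nlinarith [mul_le_mul_of_nonneg_right (mul_le_mul_of_nonneg_left hsq (sq_nonneg ξ)) hd.le]

lemma integrable_sq_mul_exp_neg_mul_sq {b : ℝ} (hb : 0 < b) :
    Integrable (fun x : ℝ => x^2 * Real.exp (-b*x^2)) := by
  have := integrable_rpow_mul_exp_neg_mul_sq hb (by norm_num : (-1:ℝ) < 2)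
  refine this.congr ?_
  filter_upwards with x
  rw [show ((2:ℝ)) = ((2:ℕ):ℝ) by norm_num, Real.rpow_natCast]

lemma tendsto_mul_exp_neg_mul_sq_atTop {b : ℝ} (hb : 0 < b) :
    Tendsto (fun x : ℝ => x * Real.exp (-b*x^2)) atTop (nhds 0) := by
  have hg : Tendsto (fun x : ℝ => 1/(b*x)) atTop (nhds 0) :=
    tendsto_const_nhds.div_atTop (tendsto_id.const_mul_atTop hb)
  refine squeeze_zero_norm' ?_ hg
  filter_upwards [eventually_ge_atTop (1:ℝ)] with x hx
  have hx0 : (0:ℝ) < x := lt_of_lt_of_le zero_lt_one hx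
  have hbx : (0:ℝ) < b * x^2 := by positivity
  have h1 : b * x^2 ≤ Real.exp (b*x^2) := (Real.add_one_le_exp _).trans' (by nlinarith)
  have h2 : Real.exp (-b*x^2) ≤ (b*x^2)⁻¹ := by
    rw [neg_mul, Real.exp_neg]
    exact inv_anti₀ hbx h1
  have h3 : x * Real.exp (-b*x^2) ≤ x * (b*x^2)⁻¹ :=
    mul_le_mul_of_nonneg_left h2 hx0.le
  have h4 : x * (b*x^2)⁻¹ = 1/(b*x) := by
    field_simp
  rw [Real.norm_eq_abs, abs_of_pos (by positivity)]
  rw [h4] at h3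
  exact h3

lemma tendsto_mul_exp_neg_mul_sq_atBot {b : ℝ} (hb : 0 < b) :
    Tendsto (fun x : ℝ => x * Real.exp (-b*x^2)) atBot (nhds 0) := by
  have h := ((tendsto_mul_exp_neg_mul_sq_atTop hb).neg).comp tendsto_neg_atBot_atTop
  rw [neg_zero] at h
  refine h.congr ?_
  intro x
  simp only [Function.comp_apply]
  ring_nf

lemma integral_sq_mul_exp_neg_mul_sq {b : ℝ} (hb : 0 < b) :
    ∫ x : ℝ, x^2 * Real.exp (-b*x^2) = (1/(2*b)) * Real.sqrt (π/b) := by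
  set F : ℝ → ℝ := fun x => -(x * Real.exp (-b*x^2))/(2*b) with hF
  have hderiv : ∀ x : ℝ, HasDerivAt F
      (x^2 * Real.exp (-b*x^2) - (1/(2*b)) * Real.exp (-b*x^2)) x := by
    intro x
    have h1 : HasDerivAt (fun x : ℝ => Real.exp (-b*x^2)) (-b*(2*x) * Real.exp (-b*x^2)) x := by
      have hinner : HasDerivAt (fun x : ℝ => -b*x^2) (-b*(2*x)) x := by
        simpa using ((hasDerivAt_pow 2 x).const_mul (-b))
      have h := hinner.exp
      convert h using 1
      ring
    have h2 := ((hasDerivAt_id x).mul h1).neg.div_const (2*b)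
    refine h2.congr_deriv ?_
    simp only [id]
    field_simp
    ring
  have hint : Integrable (fun x : ℝ =>
      x^2 * Real.exp (-b*x^2) - (1/(2*b)) * Real.exp (-b*x^2)) :=
    (integrable_sq_mul_exp_neg_mul_sq hb).sub ((integrable_exp_neg_mul_sq hb).const_mul _)
  have htop : Tendsto F atTop (nhds 0) := by
    have := (tendsto_mul_exp_neg_mul_sq_atTop hb).neg.div_const (2*b)
    rw [hF]
    simpa [neg_mul] using this
  have hbot : Tendsto F atBot (nhds 0) := by
    have := (tendsto_mul_exp_neg_mul_sq_atBot hb).neg.div_const (2*b)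
    rw [hF]
    simpa [neg_mul] using this
  have key := integral_of_hasDerivAt_of_tendsto hderiv hint hbot htop
  rw [sub_zero] at key
  have hsplit := integral_sub (integrable_sq_mul_exp_neg_mul_sq hb)
    ((integrable_exp_neg_mul_sq hb).const_mul (1/(2*b)))
  rw [hsplit] at key
  have hgauss : ∫ x : ℝ, Real.exp (-b*x^2) = Real.sqrt (π/b) := integral_gaussian b
  have : ∫ x : ℝ, (1/(2*b)) * Real.exp (-b*x^2) = (1/(2*b)) * Real.sqrt (π/b) := by
    rw [integral_const_mul, hgauss]
  linarith [key, this.symm ▸ key]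

noncomputable def Tmap : (ℝ × ℝ) →ₗ[ℝ] ℝ × ℝ :=
  (LinearMap.fst ℝ ℝ ℝ + LinearMap.snd ℝ ℝ ℝ).prod (LinearMap.fst ℝ ℝ ℝ - LinearMap.snd ℝ ℝ ℝ)

lemma Tmap_apply (p : ℝ × ℝ) : Tmap p = (p.1 + p.2, p.1 - p.2) := rfl

lemma Tmap_det : LinearMap.det Tmap = -2 := by
  have := LinearMap.det_toMatrix (Module.Basis.finTwoProd ℝ) Tmap
  rw [← this, Matrix.det_fin_two]
  simp [LinearMap.toMatrix_apply, Tmap_apply, Module.Basis.finTwoProd_zero, Module.Basis.finTwoProd_one,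
    Module.Basis.coe_finTwoProd_repr]
  norm_num

lemma map_Tmap : (volume : Measure (ℝ × ℝ)).map Tmap
    = ENNReal.ofReal (2:ℝ)⁻¹ • (volume : Measure (ℝ × ℝ)) := by
  have h := Measure.map_linearMap_addHaar_eq_smul_addHaar (volume : Measure (ℝ × ℝ))
    (f := Tmap) (by rw [Tmap_det]; norm_num)
  rw [h, Tmap_det]
  norm_num

lemma integral_comp_Tmap (G : ℝ × ℝ → ℝ) (hG : AEStronglyMeasurable G (volume : Measure (ℝ × ℝ))) :
    ∫ p, G (Tmap p) = (1/2) * ∫ q, G q := by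
  have hTm : AEMeasurable Tmap (volume : Measure (ℝ × ℝ)) :=
    Tmap.continuous_of_finiteDimensional.measurable.aemeasurable
  have hG' : AEStronglyMeasurable G ((volume : Measure (ℝ × ℝ)).map Tmap) := by
    rw [map_Tmap]
    exact hG.smul_measure _
  rw [← MeasureTheory.integral_map hTm hG', map_Tmap, integral_smul_measure]
  rw [ENNReal.toReal_ofReal (by norm_num : (0:ℝ) ≤ (2:ℝ)⁻¹)]
  simp only [smul_eq_mul]
  ring

lemma integrable_comp_Tmap {G : ℝ × ℝ → ℝ} (hG : Integrable G (volume : Measure (ℝ × ℝ))) :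
    Integrable (fun p => G (Tmap p)) (volume : Measure (ℝ × ℝ)) := by
  have hTm : AEMeasurable Tmap (volume : Measure (ℝ × ℝ)) :=
    Tmap.continuous_of_finiteDimensional.measurable.aemeasurable
  have hG' : AEStronglyMeasurable G ((volume : Measure (ℝ × ℝ)).map Tmap) := by
    rw [map_Tmap]
    exact hG.aestronglyMeasurable.smul_measure _
  rw [show (fun p => G (Tmap p)) = G ∘ Tmap from rfl]
  apply (integrable_map_measure hG' hTm).mp
  rw [map_Tmap]
  exact hG.smul_measure (by simp)

-- basic g₀/g₂ facts
lemma continuous_g₀ : Continuous (fun ξ : ℝ => (sint (ξ^2))^2) :=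
  (continuous_sint.comp (continuous_pow 2)).pow 2

lemma continuous_g₂ : Continuous (fun ξ : ℝ => ξ^2 * (sint (ξ^2))^2) :=
  (continuous_pow 2).mul continuous_g₀

lemma integrable_g₀ : Integrable (fun ξ : ℝ => (sint (ξ^2))^2) := by
  apply Integrable.mono' (integrable_inv_one_add_sq.const_mul 8)
    continuous_g₀.aestronglyMeasurable
  filter_upwards with ξ
  rw [Real.norm_eq_abs, abs_of_nonneg (sq_nonneg _)]
  simpa [div_eq_mul_inv] using sint_sq_le ξ

lemma integrable_g₂ : Integrable (fun ξ : ℝ => ξ^2 * (sint (ξ^2))^2) := by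
  apply Integrable.mono' (integrable_inv_one_add_sq.const_mul 8)
    continuous_g₂.aestronglyMeasurable
  filter_upwards with ξ
  rw [Real.norm_eq_abs, abs_of_nonneg (by positivity)]
  simpa [div_eq_mul_inv] using mul_sint_sq_le ξ

lemma sint_zero : sint 0 = 1 := by simp [sint]

lemma A₁_pos : 0 < A₁ := by
  rw [A₁, integral_pos_iff_support_of_nonneg (fun ξ => sq_nonneg _) integrable_g₀]
  have hopen : IsOpen {ξ : ℝ | 0 < (sint (ξ^2))^2} :=
    isOpen_lt continuous_const (continuous_g₀)
  have h0 : (0:ℝ) ∈ {ξ : ℝ | 0 < (sint (ξ^2))^2} := by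
    simp [sint_zero]
  have hsub : {ξ : ℝ | 0 < (sint (ξ^2))^2} ⊆ Function.support (fun ξ => (sint (ξ^2))^2) := by
    intro ξ hξ
    exact ne_of_gt hξ
  calc (0:ℝ≥0∞) < volume {ξ : ℝ | 0 < (sint (ξ^2))^2} := hopen.measure_pos volume ⟨0, h0⟩
    _ ≤ volume (Function.support (fun ξ => (sint (ξ^2))^2)) := measure_mono hsub

section scaled
variable {P : ℝ} (hP : 0 < P)

lemma arg_eq (P : ℝ) (hP : 0 < P) (v : ℝ) : ((2*P)⁻¹ * v)^2 = v^2/(4*P^2) := by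
  rw [mul_pow, inv_pow]
  rw [show ((2*P)^2 : ℝ) = 4*P^2 by ring, inv_mul_eq_div]

lemma psi0_eq (hP : 0 < P) : (fun v : ℝ => (sint (v^2/(4*P^2)))^2)
    = fun v => (fun ξ : ℝ => (sint (ξ^2))^2) ((2*P)⁻¹ * v) := by
  funext v
  show sint (v^2/(4*P^2))^2 = sint (((2*P)⁻¹*v)^2)^2
  rw [arg_eq P hP v]

lemma integrable_psi0 (hP : 0 < P) : Integrable (fun v : ℝ => (sint (v^2/(4*P^2)))^2) := by
  rw [psi0_eq hP]
  exact integrable_g₀.comp_mul_left' (by positivity)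

lemma integral_psi0 (hP : 0 < P) : ∫ v : ℝ, (sint (v^2/(4*P^2)))^2 = 2*P*A₁ := by
  rw [psi0_eq hP, Measure.integral_comp_mul_left (fun ξ : ℝ => (sint (ξ^2))^2) ((2*P)⁻¹)]
  rw [inv_inv, abs_of_pos (by positivity : (0:ℝ) < 2*P), smul_eq_mul, ← A₁]

lemma psi2_eq (hP : 0 < P) : (fun v : ℝ => v^2 * (sint (v^2/(4*P^2)))^2)
    = fun v => (4*P^2) * ((fun ξ : ℝ => ξ^2 * (sint (ξ^2))^2) ((2*P)⁻¹ * v)) := by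
  funext v
  show v^2 * sint (v^2/(4*P^2))^2 = (4*P^2) * (((2*P)⁻¹*v)^2 * sint ((((2*P)⁻¹*v))^2)^2)
  rw [arg_eq P hP v]
  field_simp

lemma integrable_psi2 (hP : 0 < P) : Integrable (fun v : ℝ => v^2 * (sint (v^2/(4*P^2)))^2) := by
  rw [psi2_eq hP]
  exact (integrable_g₂.comp_mul_left' (by positivity : ((2*P)⁻¹:ℝ) ≠ 0)).const_mul _

lemma integral_psi2 (hP : 0 < P) :
    ∫ v : ℝ, v^2 * (sint (v^2/(4*P^2)))^2 = 8*P^3*A₂ := by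
  rw [psi2_eq hP, integral_const_mul,
    Measure.integral_comp_mul_left (fun ξ : ℝ => ξ^2 * (sint (ξ^2))^2) ((2*P)⁻¹)]
  rw [inv_inv, abs_of_pos (by positivity : (0:ℝ) < 2*P), smul_eq_mul, ← A₂]
  ring

lemma integrable_psim (hP : 0 < P) : Integrable (fun v : ℝ => v * (sint (v^2/(4*P^2)))^2) := by
  apply Integrable.mono' ((integrable_psi0 hP).add (integrable_psi2 hP))
  · apply Continuous.aestronglyMeasurable
    exact continuous_id.mul ((continuous_sint.comp (by continuity)).pow 2)
  · filter_upwards with v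
    rw [Real.norm_eq_abs, abs_mul, abs_of_nonneg (sq_nonneg (sint (v^2/(4*P^2))))]
    have h1 : |v| ≤ 1 + v^2 := by nlinarith [sq_nonneg (|v| - 1), sq_abs v, abs_nonneg v]
    have h2 : (0:ℝ) ≤ (sint (v^2/(4*P^2)))^2 := sq_nonneg _
    simp only [Pi.add_apply]
    nlinarith [mul_le_mul_of_nonneg_right h1 h2]

lemma integral_psim (hP : 0 < P) : ∫ v : ℝ, v * (sint (v^2/(4*P^2)))^2 = 0 := by
  set φ : ℝ → ℝ := fun v => v * (sint (v^2/(4*P^2)))^2 with hφ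
  have godd : ∀ v, φ (-v) = -φ v := by
    intro v
    simp only [hφ, neg_sq]
    ring
  have h := Measure.integral_comp_mul_left φ (-1)
  simp only [neg_one_mul, godd] at h
  rw [integral_neg] at h
  simp only [abs_of_nonneg, inv_neg, inv_one, abs_neg, abs_one, one_smul] at h
  linarith

end scaled

lemma integrable_phim {s : ℝ} (hs : 0 < s) :
    Integrable (fun u : ℝ => u * Real.exp (-u^2/(2*s))) := by
  have h := integrable_mul_exp_neg_mul_sq (b := (2*s)⁻¹) (by positivity)
  refine h.congr ?_
  filter_upwards with u
  congr 1
  field_simp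

lemma integral_phim {s : ℝ} (hs : 0 < s) : ∫ u : ℝ, u * Real.exp (-u^2/(2*s)) = 0 := by
  set φ : ℝ → ℝ := fun u => u * Real.exp (-u^2/(2*s)) with hφ
  have godd : ∀ u, φ (-u) = -φ u := by
    intro u
    simp only [hφ, neg_sq]
    ring
  have h := Measure.integral_comp_mul_left φ (-1)
  simp only [neg_one_mul, godd] at h
  rw [integral_neg] at h
  simp only [inv_neg, inv_one, abs_neg, abs_one, one_smul] at h
  linarith

lemma integrable_phi0 {s : ℝ} (hs : 0 < s) :
    Integrable (fun u : ℝ => Real.exp (-u^2/(2*s))) := by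
  have h := integrable_exp_neg_mul_sq (b := (2*s)⁻¹) (by positivity)
  refine h.congr ?_
  filter_upwards with u
  congr 1
  field_simp

lemma integral_phi0 {s : ℝ} (hs : 0 < s) :
    ∫ u : ℝ, Real.exp (-u^2/(2*s)) = Real.sqrt (2*π*s) := by
  have heq : (fun u : ℝ => Real.exp (-u^2/(2*s))) = fun u => Real.exp (-(2*s)⁻¹*u^2) := by
    funext u; congr 1; field_simp
  rw [heq, integral_gaussian]
  congr 1
  field_simp

lemma integrable_phi1 {s : ℝ} (hs : 0 < s) :
    Integrable (fun u : ℝ => u^2 * Real.exp (-u^2/(2*s))) := by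
  have h := integrable_sq_mul_exp_neg_mul_sq (b := (2*s)⁻¹) (by positivity)
  refine h.congr ?_
  filter_upwards with u
  congr 2
  field_simp

lemma integral_phi1 {s : ℝ} (hs : 0 < s) :
    ∫ u : ℝ, u^2 * Real.exp (-u^2/(2*s)) = s * Real.sqrt (2*π*s) := by
  have heq : (fun u : ℝ => u^2 * Real.exp (-u^2/(2*s)))
      = fun u => u^2 * Real.exp (-(2*s)⁻¹*u^2) := by
    funext u; congr 2; field_simp
  rw [heq, integral_sq_mul_exp_neg_mul_sq (by positivity)]
  have h1 : (1:ℝ)/(2*(2*s)⁻¹) = s := by field_simp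
  have h2 : π/(2*s)⁻¹ = 2*π*s := by field_simp
  rw [h1, h2]

/-- For every `s > 0` and `P > 0`, the second moment of the near-field joint
density is `∫ x₁² p_NF^S(x₁,x₂) dx₁ dx₂ = (1/4)(s + 4A₂P²/A₁)`. -/
theorem pNF_secondMoment (s P : ℝ) (hs : 0 < s) (hP : 0 < P) :
    ∫ x : ℝ × ℝ, x.1 ^ 2 * pNF s P x.1 x.2
      = (1 / 4) * (s + 4 * A₂ * P ^ 2 / A₁) := by
  set C : ℝ := (Real.sqrt (2 * Real.pi * s) * A₁ * P)⁻¹ with hC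
  set G : ℝ × ℝ → ℝ := fun q =>
    ((q.1 + q.2)/2)^2 * (C * Real.exp (-q.1^2/(2*s)) * (sint (q.2^2/(4*P^2)))^2) with hG
  -- step 1 : rewrite as G ∘ Tmap
  have hFG : (fun x : ℝ × ℝ => x.1 ^ 2 * pNF s P x.1 x.2) = fun x => G (Tmap x) := by
    funext x
    rw [Tmap_apply]
    simp only [hG, pNF, hC]
    ring
  -- continuity of G
  have hGc : Continuous G := by
    apply Continuous.mul
    · continuity
    · apply Continuous.mul
      · exact continuous_const.mul (Real.continuous_exp.comp (by continuity))
      · exact (continuous_sint.comp (by continuity)).pow 2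
  -- step 2 : split G into three product terms
  set t1 : ℝ × ℝ → ℝ := fun q =>
    (C/4) * ((q.1^2 * Real.exp (-q.1^2/(2*s))) * (sint (q.2^2/(4*P^2)))^2) with ht1
  set t2 : ℝ × ℝ → ℝ := fun q =>
    (C/2) * ((q.1 * Real.exp (-q.1^2/(2*s))) * (q.2 * (sint (q.2^2/(4*P^2)))^2)) with ht2
  set t3 : ℝ × ℝ → ℝ := fun q =>
    (C/4) * (Real.exp (-q.1^2/(2*s)) * (q.2^2 * (sint (q.2^2/(4*P^2)))^2)) with ht3
  have hsplit : ∀ q : ℝ × ℝ, G q = t1 q + t2 q + t3 q := by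
    intro q
    simp only [hG, ht1, ht2, ht3]
    ring
  have hit1 : Integrable t1 (volume.prod volume) :=
    (((integrable_phi1 hs).mul_prod (integrable_psi0 hP))).const_mul _
  have hit2 : Integrable t2 (volume.prod volume) :=
    (((integrable_phim hs).mul_prod (integrable_psim hP))).const_mul _
  have hit3 : Integrable t3 (volume.prod volume) :=
    (((integrable_phi0 hs).mul_prod (integrable_psi2 hP))).const_mul _
  have hv1 : ∫ q, t1 q ∂(volume.prod volume) = (C/4) * ((s * Real.sqrt (2*π*s)) * (2*P*A₁)) := by
    rw [ht1]
    rw [integral_const_mul]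
    have h := integral_prod_mul (μ := (volume : Measure ℝ)) (ν := (volume : Measure ℝ))
      (fun u : ℝ => u^2 * Real.exp (-u^2/(2*s))) (fun v : ℝ => (sint (v^2/(4*P^2)))^2)
    rw [h, integral_phi1 hs, integral_psi0 hP]
  have hv2 : ∫ q, t2 q ∂(volume.prod volume) = 0 := by
    rw [ht2, integral_const_mul]
    have h := integral_prod_mul (μ := (volume : Measure ℝ)) (ν := (volume : Measure ℝ))
      (fun u : ℝ => u * Real.exp (-u^2/(2*s))) (fun v : ℝ => v * (sint (v^2/(4*P^2)))^2)
    rw [h, integral_phim hs, integral_psim hP]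
    ring
  have hv3 : ∫ q, t3 q ∂(volume.prod volume) = (C/4) * (Real.sqrt (2*π*s) * (8*P^3*A₂)) := by
    rw [ht3, integral_const_mul]
    have h := integral_prod_mul (μ := (volume : Measure ℝ)) (ν := (volume : Measure ℝ))
      (fun u : ℝ => Real.exp (-u^2/(2*s))) (fun v : ℝ => v^2 * (sint (v^2/(4*P^2)))^2)
    rw [h, integral_phi0 hs, integral_psi2 hP]
  have hGint : ∫ q, G q = (C/4) * ((s * Real.sqrt (2*π*s)) * (2*P*A₁))
      + 0 + (C/4) * (Real.sqrt (2*π*s) * (8*P^3*A₂)) := by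
    rw [Measure.volume_eq_prod]
    calc ∫ q, G q ∂(volume.prod volume) = ∫ q, (t1 q + t2 q + t3 q) ∂(volume.prod volume) := by
          exact integral_congr_ae (Filter.Eventually.of_forall hsplit)
      _ = (∫ q, t1 q ∂(volume.prod volume)) + (∫ q, t2 q ∂(volume.prod volume))
          + ∫ q, t3 q ∂(volume.prod volume) := by
          have h12 : Integrable (fun q => t1 q + t2 q) (volume.prod volume) := hit1.add hit2
          rw [integral_add h12 hit3, integral_add hit1 hit2]
      _ = (C/4) * ((s * Real.sqrt (2*π*s)) * (2*P*A₁))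
          + 0 + (C/4) * (Real.sqrt (2*π*s) * (8*P^3*A₂)) := by
          rw [hv1, hv2, hv3]
  -- step 3 : put everything together
  rw [hFG, integral_comp_Tmap G hGc.aestronglyMeasurable, hGint]
  have hR : (0:ℝ) < Real.sqrt (2*π*s) := Real.sqrt_pos.2 (by positivity)
  have hA : (0:ℝ) < A₁ := A₁_pos
  rw [hC]
  field_simp
  ring
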